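/- Let p > 1 be a real number and let a, t be real numbers with 0 < a ≤ t < 1. Then (t^{1−p} a^p + (1−t)^{1−p} (1−a)^p − 1)/(p−1) ≥ 2 (t−a)². -/

import Mathlib

open Real

lemma binary_pinsker_aux (a t : ℝ) (ha : 0 < a) (hat : a ≤ t) (ht : t < 1) :
    2 * (t - a) ^ 2 ≤ a * Real.log (a / t) + (1 - a) * Real.log ((1 - a) / (1 - t)) := by
  set g : ℝ → ℝ := fun x =>
    a * (Real.log a - Real.log x) + (1 - a) * (Real.log (1 - a) - Real.log (1 - x))
      - 2 * (x - a) ^ 2 with hg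
  have key : ∀ x ∈ Set.Icc a t, HasDerivAt g ((x - a) * (2*x - 1)^2 / (x * (1 - x))) x := by
    intro x hx
    have hx0 : 0 < x := lt_of_lt_of_le ha hx.1
    have hx1 : x < 1 := lt_of_le_of_lt hx.2 ht
    have h1 : HasDerivAt (fun x : ℝ => Real.log x) (1/x) x := by
      simpa using Real.hasDerivAt_log (ne_of_gt hx0)
    have h2 : HasDerivAt (fun x : ℝ => Real.log (1 - x)) (-(1/(1-x))) x := by
      have := (Real.hasDerivAt_log (x := 1 - x) (by linarith)).comp x
        ((hasDerivAt_const x (1:ℝ)).sub (hasDerivAt_id x))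
      simpa [Function.comp_def] using this
    have h3 : HasDerivAt g
        (a * (0 - 1/x) + (1-a) * (0 - (-(1/(1-x)))) - 2 * (2 * (x - a)^1 * 1)) x := by
      exact (((hasDerivAt_const x _).sub h1).const_mul a |>.add
        (((hasDerivAt_const x _).sub h2).const_mul (1-a))).sub
        ((((hasDerivAt_id x).sub_const a).pow 2).const_mul 2)
    convert h3 using 1
    have hx0' : x ≠ 0 := ne_of_gt hx0
    have hx1' : (1:ℝ) - x ≠ 0 := by linarith
    field_simp
    ring
  have hcont : ContinuousOn g (Set.Icc a t) :=
    fun x hx => (key x hx).continuousAt.continuousWithinAt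
  have hmono : MonotoneOn g (Set.Icc a t) := by
    apply monotoneOn_of_deriv_nonneg (convex_Icc a t) hcont
    · intro x hx
      rw [interior_Icc] at hx
      exact (key x (Set.mem_Icc_of_Ioo hx)).differentiableAt.differentiableWithinAt
    · intro x hx
      rw [interior_Icc] at hx
      rw [(key x (Set.mem_Icc_of_Ioo hx)).deriv]
      have hx0 : 0 < x := lt_of_lt_of_le ha (le_of_lt hx.1)
      have hx1 : x < 1 := hx.2.trans ht
      have h4 : 0 ≤ x - a := by linarith [hx.1]
      have h5 : 0 < x * (1 - x) := by nlinarith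
      exact div_nonneg (mul_nonneg h4 (sq_nonneg _)) (le_of_lt h5)
  have h0 : g a ≤ g t := hmono (Set.left_mem_Icc.2 hat) (Set.right_mem_Icc.2 hat) hat
  have hga : g a = 0 := by simp [hg]
  have hgt : g t = a * Real.log (a / t) + (1 - a) * Real.log ((1 - a) / (1 - t))
      - 2 * (t - a) ^ 2 := by
    have ht0 : 0 < t := lt_of_lt_of_le ha hat
    rw [hg]
    rw [Real.log_div (ne_of_gt ha) (ne_of_gt ht0),
      Real.log_div (by linarith : (1:ℝ) - a ≠ 0) (by linarith : (1:ℝ) - t ≠ 0)]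
  rw [hga] at h0
  rw [hgt] at h0
  linarith

theorem stmt_4 (p : ℝ) (hp : 1 < p) (a t : ℝ) (ha : 0 < a) (hat : a ≤ t) (ht : t < 1) :
    (t ^ (1 - p) * a ^ p + (1 - t) ^ (1 - p) * (1 - a) ^ p - 1) / (p - 1) ≥
      2 * (t - a) ^ 2 := by
  have ht0 : 0 < t := lt_of_lt_of_le ha hat
  have h1a : 0 < 1 - a := by linarith
  have h1t : 0 < 1 - t := by linarith
  have hp1 : 0 < p - 1 := by linarith
  have hx : (0:ℝ) < (a / t) ^ (p - 1) := Real.rpow_pos_of_pos (by positivity) _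
  have hy : (0:ℝ) < ((1 - a) / (1 - t)) ^ (p - 1) := Real.rpow_pos_of_pos (by positivity) _
  have hS1 : t ^ (1 - p) * a ^ p = a * (a / t) ^ (p - 1) := by
    rw [show (1 : ℝ) - p = -(p - 1) by ring, Real.rpow_neg ht0.le,
      show p = 1 + (p - 1) by ring, Real.rpow_add ha, Real.rpow_one,
      Real.div_rpow ha.le ht0.le, div_eq_mul_inv]
    ring
  have hS2 : (1 - t) ^ (1 - p) * (1 - a) ^ p = (1 - a) * ((1 - a) / (1 - t)) ^ (p - 1) := by
    rw [show (1 : ℝ) - p = -(p - 1) by ring, Real.rpow_neg h1t.le,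
      show p = 1 + (p - 1) by ring, Real.rpow_add h1a, Real.rpow_one,
      Real.div_rpow h1a.le h1t.le, div_eq_mul_inv]
    ring
  set S := t ^ (1 - p) * a ^ p + (1 - t) ^ (1 - p) * (1 - a) ^ p with hSdef
  have hSeq : S = a * (a / t) ^ (p - 1) + (1 - a) * ((1 - a) / (1 - t)) ^ (p - 1) := by
    rw [hSdef, hS1, hS2]
  have hSpos : 0 < S := by rw [hSeq]; positivity
  have hAM : ((a / t) ^ (p - 1)) ^ a * (((1 - a) / (1 - t)) ^ (p - 1)) ^ (1 - a) ≤ S := by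
    rw [hSeq]
    exact Real.geom_mean_le_arith_mean2_weighted ha.le h1a.le hx.le hy.le (by ring)
  have hlog : a * ((p - 1) * Real.log (a / t)) + (1 - a) * ((p - 1) * Real.log ((1 - a) / (1 - t)))
      ≤ Real.log S := by
    have := Real.log_le_log (by positivity) hAM
    rwa [Real.log_mul (by positivity) (by positivity), Real.log_rpow hx, Real.log_rpow hy,
      Real.log_rpow (by positivity), Real.log_rpow (by positivity)] at this
  have hls : Real.log S ≤ S - 1 := Real.log_le_sub_one_of_pos hSpos
  have hpins := binary_pinsker_aux a t ha hat ht
  rw [ge_iff_le, le_div_iff₀ hp1]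
  nlinarith [mul_le_mul_of_nonneg_left hpins hp1.le]
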